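/- Let E, S, H be real Banach spaces, let A : E → E be a bounded (continuous) linear operator, let L : S → H be a continuous linear isomorphism, let F : ℝ × E × S → E be continuous and, for every t′ > 0 and r > 0, Lipschitz in (V, w) with some constant L(t′, r) on the set {t ∈ [0, t′], ‖V‖_E + ‖w‖_S ≤ r}, and let G : ℝ × E → H be continuous and, for every t′ > 0 and C > 0, Lipschitz in V with some constant L₂(t′, C) on the set {t ∈ [0, t′], ‖V‖_E ≤ C}. Then for every V₀ ∈ E there exists ε > 0 and a unique pair of continuous functions V : [0, ε] → E, w : [0, ε] → S such that V(0) = V₀ and, for every t ∈ [0, ε], V is differentiable at t with V′(t) = A(V(t)) + F(t, V(t), w(t)) and L(w(t)) = G(t, V(t)). -/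

import Mathlib

open Set

set_option maxHeartbeats 1000000 in
/-- Local existence and uniqueness for the abstract PDAE
`V' = A(V) + F(t, V, w)`, `0 = L(w) - G(t, V)`, `V(0) = V₀`,
in Banach spaces, with `A` a bounded linear operator. -/
theorem pdae_local_existence_uniqueness
    {E S H : Type*}
    [NormedAddCommGroup E] [NormedSpace ℝ E] [CompleteSpace E]
    [NormedAddCommGroup S] [NormedSpace ℝ S] [CompleteSpace S]
    [NormedAddCommGroup H] [NormedSpace ℝ H] [CompleteSpace H]
    (A : E →L[ℝ] E) (L : S ≃L[ℝ] H)
    (F : ℝ × E × S → E) (hFc : Continuous F)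
    (hFlip : ∀ t' > (0 : ℝ), ∀ r > (0 : ℝ), ∃ Lip ≥ (0 : ℝ),
      ∀ t ∈ Icc (0 : ℝ) t', ∀ V₁ V₂ : E, ∀ w₁ w₂ : S,
        ‖V₁‖ + ‖w₁‖ ≤ r → ‖V₂‖ + ‖w₂‖ ≤ r →
        ‖F (t, V₁, w₁) - F (t, V₂, w₂)‖ ≤ Lip * (‖V₁ - V₂‖ + ‖w₁ - w₂‖))
    (G : ℝ × E → H) (hGc : Continuous G)
    (hGlip : ∀ t' > (0 : ℝ), ∀ C > (0 : ℝ), ∃ L₂ ≥ (0 : ℝ),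
      ∀ t ∈ Icc (0 : ℝ) t', ∀ V₁ V₂ : E,
        ‖V₁‖ ≤ C → ‖V₂‖ ≤ C →
        ‖G (t, V₁) - G (t, V₂)‖ ≤ L₂ * ‖V₁ - V₂‖)
    (V₀ : E) :
    ∃ ε > (0 : ℝ), ∃ V : ℝ → E, ∃ w : ℝ → S,
      (ContinuousOn V (Icc 0 ε) ∧ ContinuousOn w (Icc 0 ε) ∧
        V 0 = V₀ ∧
        ∀ t ∈ Icc (0 : ℝ) ε,
          HasDerivAt V (A (V t) + F (t, V t, w t)) t ∧ L (w t) = G (t, V t)) ∧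
      ∀ V' : ℝ → E, ∀ w' : ℝ → S,
        (ContinuousOn V' (Icc 0 ε) ∧ ContinuousOn w' (Icc 0 ε) ∧
          V' 0 = V₀ ∧
          ∀ t ∈ Icc (0 : ℝ) ε,
            HasDerivAt V' (A (V' t) + F (t, V' t, w' t)) t ∧ L (w' t) = G (t, V' t)) →
        ∀ t ∈ Icc (0 : ℝ) ε, V' t = V t ∧ w' t = w t := by
  
  classical
  set Ls : H →L[ℝ] S := (L.symm : H →L[ℝ] S) with hLs_def
  -- Key lemma: Lipschitz and boundedness of the reduced vector field on norm-balls
  have key : ∀ C : ℝ, ‖V₀‖ < C →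
      ∃ K : NNReal, ∃ Cb : ℝ, 0 ≤ Cb ∧
        ∀ t ∈ Icc (0 : ℝ) 1,
          LipschitzOnWith K (fun x : E => A x + F (t, x, Ls (G (t, x)))) {x : E | ‖x‖ ≤ C} ∧
          ∀ x : E, ‖x‖ ≤ C → ‖A x + F (t, x, Ls (G (t, x)))‖ ≤ Cb := by
    intro C hC
    have hC0 : 0 < C := lt_of_le_of_lt (norm_nonneg _) hC
    obtain ⟨L₂, hL₂0, hL₂⟩ := hGlip 1 one_pos C hC0
    obtain ⟨M₀, hM₀⟩ := isCompact_Icc.exists_bound_of_continuousOn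
      (s := Icc (0:ℝ) 1) ((hGc.comp (continuous_id.prodMk continuous_const)).continuousOn
        (f := fun t : ℝ => G (t, V₀)))
    set M : ℝ := max M₀ 0 with hM_def
    have hM0 : 0 ≤ M := le_max_right _ _
    have hGb : ∀ t ∈ Icc (0:ℝ) 1, ∀ x : E, ‖x‖ ≤ C →
        ‖G (t, x)‖ ≤ M + L₂ * (C + ‖V₀‖) := by
      intro t ht x hx
      have h1 := hL₂ t ht x V₀ hx hC.le
      have h2 : ‖G (t, x)‖ ≤ ‖G (t, V₀)‖ + ‖G (t, x) - G (t, V₀)‖ := by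
        have := norm_add_le (G (t, V₀)) (G (t, x) - G (t, V₀))
        simpa using this
      have h3 : ‖x - V₀‖ ≤ C + ‖V₀‖ := (norm_sub_le _ _).trans (by linarith)
      have h4 : ‖G (t, V₀)‖ ≤ M := (hM₀ t ht).trans (le_max_left _ _)
      nlinarith [mul_le_mul_of_nonneg_left h3 hL₂0]
    set W : ℝ := ‖Ls‖ * (M + L₂ * (C + ‖V₀‖)) with hW_def
    have hW0 : 0 ≤ W := mul_nonneg (norm_nonneg _)
      (add_nonneg hM0 (mul_nonneg hL₂0 (add_nonneg hC0.le (norm_nonneg _))))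
    have hwb : ∀ t ∈ Icc (0:ℝ) 1, ∀ x : E, ‖x‖ ≤ C → ‖Ls (G (t, x))‖ ≤ W := by
      intro t ht x hx
      exact (Ls.le_opNorm _).trans (mul_le_mul_of_nonneg_left (hGb t ht x hx) (norm_nonneg _))
    set r : ℝ := C + W + 1 with hr_def
    have hr : 0 < r := by dsimp [r]; linarith
    obtain ⟨Lip, hLip0, hLip⟩ := hFlip 1 one_pos r hr
    obtain ⟨M₁, hM₁⟩ := isCompact_Icc.exists_bound_of_continuousOn
      (s := Icc (0:ℝ) 1) ((hFc.comp (continuous_id.prodMk continuous_const)).continuousOn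
        (f := fun t : ℝ => F (t, V₀, 0)))
    set MF : ℝ := max M₁ 0 with hMF_def
    have hMF0 : 0 ≤ MF := le_max_right _ _
    have hKnn : 0 ≤ ‖A‖ + Lip * (1 + ‖Ls‖ * L₂) := by
      have : 0 ≤ 1 + ‖Ls‖ * L₂ := by positivity
      nlinarith [norm_nonneg A]
    refine ⟨Real.toNNReal (‖A‖ + Lip * (1 + ‖Ls‖ * L₂)),
      ‖A‖ * C + (MF + Lip * (C + ‖V₀‖ + W)), ?_, ?_⟩
    · have h1 : 0 ≤ C + ‖V₀‖ + W := by linarith [norm_nonneg V₀]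
      nlinarith [norm_nonneg A, mul_nonneg hLip0 h1]
    intro t ht
    have hxw : ∀ x : E, ‖x‖ ≤ C → ‖x‖ + ‖Ls (G (t, x))‖ ≤ r := by
      intro x hx
      have := hwb t ht x hx
      dsimp [r]; linarith
    constructor
    · apply LipschitzOnWith.of_dist_le_mul
      intro x hx y hy
      simp only [Set.mem_setOf_eq] at hx hy
      rw [dist_eq_norm, dist_eq_norm]
      have hFd := hLip t ht x y (Ls (G (t, x))) (Ls (G (t, y))) (hxw x hx) (hxw y hy)
      have hwd : ‖Ls (G (t, x)) - Ls (G (t, y))‖ ≤ ‖Ls‖ * (L₂ * ‖x - y‖) := by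
        rw [← map_sub]
        exact (Ls.le_opNorm _).trans
          (mul_le_mul_of_nonneg_left (hL₂ t ht x y hx hy) (norm_nonneg _))
      have h1 : A x + F (t, x, Ls (G (t, x))) - (A y + F (t, y, Ls (G (t, y))))
          = A (x - y) + (F (t, x, Ls (G (t, x))) - F (t, y, Ls (G (t, y)))) := by
        rw [map_sub]; abel
      rw [h1, Real.coe_toNNReal _ hKnn]
      calc ‖A (x - y) + (F (t, x, Ls (G (t, x))) - F (t, y, Ls (G (t, y))))‖
          ≤ ‖A (x - y)‖ + ‖F (t, x, Ls (G (t, x))) - F (t, y, Ls (G (t, y)))‖ :=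
            norm_add_le _ _
        _ ≤ (‖A‖ + Lip * (1 + ‖Ls‖ * L₂)) * ‖x - y‖ := by
            have hA := A.le_opNorm (x - y)
            have h6 : Lip * (‖x - y‖ + ‖Ls (G (t, x)) - Ls (G (t, y))‖)
                ≤ Lip * (‖x - y‖ + ‖Ls‖ * (L₂ * ‖x - y‖)) :=
              mul_le_mul_of_nonneg_left (by linarith) hLip0
            have h7 : Lip * (‖x - y‖ + ‖Ls‖ * (L₂ * ‖x - y‖)) + ‖A‖ * ‖x - y‖
                = (‖A‖ + Lip * (1 + ‖Ls‖ * L₂)) * ‖x - y‖ := by ring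
            linarith
    · intro x hx
      have hV₀r : ‖V₀‖ + ‖(0 : S)‖ ≤ r := by
        rw [norm_zero]; dsimp [r]; linarith [hC.le]
      have hFd := hLip t ht x V₀ (Ls (G (t, x))) 0 (hxw x hx) hV₀r
      rw [sub_zero] at hFd
      have h2 : ‖F (t, x, Ls (G (t, x)))‖
          ≤ ‖F (t, V₀, 0)‖ + ‖F (t, x, Ls (G (t, x))) - F (t, V₀, 0)‖ := by
        have := norm_add_le (F (t, V₀, 0)) (F (t, x, Ls (G (t, x))) - F (t, V₀, 0))
        simpa using this
      have h3 : ‖x - V₀‖ ≤ C + ‖V₀‖ := (norm_sub_le _ _).trans (by linarith)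
      have h4 : ‖F (t, V₀, 0)‖ ≤ MF := (hM₁ t ht).trans (le_max_left _ _)
      have h5 : ‖Ls (G (t, x))‖ ≤ W := hwb t ht x hx
      have hA := A.le_opNorm x
      calc ‖A x + F (t, x, Ls (G (t, x)))‖
          ≤ ‖A x‖ + ‖F (t, x, Ls (G (t, x)))‖ := norm_add_le _ _
        _ ≤ ‖A‖ * C + (MF + Lip * (C + ‖V₀‖ + W)) := by
            nlinarith [norm_nonneg A, mul_le_mul_of_nonneg_left (add_le_add h3 h5) hLip0]
  -- Existence via Picard–Lindelöf
  obtain ⟨K, Cb, hCb0, hkey⟩ := key (‖V₀‖ + 1) (lt_add_one _)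
  set proj : ℝ → ℝ := fun t => min (max t 0) 1 with hproj_def
  have hproj_mem : ∀ t : ℝ, proj t ∈ Icc (0:ℝ) 1 :=
    fun t => ⟨le_min (le_max_right _ _) zero_le_one, min_le_right _ _⟩
  set v : ℝ → E → E := fun t x => A x + F (proj t, x, Ls (G (proj t, x))) with hv_def
  set a : ℝ := min 1 (1 / (Cb + 1)) with ha_def
  have ha : 0 < a := lt_min one_pos (by positivity)
  have ha1 : a ≤ 1 := min_le_left _ _
  have hball : Metric.closedBall V₀ 1 ⊆ {x : E | ‖x‖ ≤ ‖V₀‖ + 1} := by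
    intro x hx
    rw [Metric.mem_closedBall, dist_eq_norm] at hx
    have : ‖x‖ ≤ ‖x - V₀‖ + ‖V₀‖ := by
      have := norm_add_le (x - V₀) V₀
      simpa using this
    simp only [Set.mem_setOf_eq]; linarith
  have hpl : IsPicardLindelof v (tmin := -a) (tmax := a) ⟨0, ⟨neg_nonpos.2 ha.le, ha.le⟩⟩
      V₀ 1 0 (Real.toNNReal Cb) K := by
    refine ⟨?_, ?_, ?_, ?_⟩
    · intro t _
      exact ((hkey (proj t) (hproj_mem t)).1).mono (by rw [NNReal.coe_one]; exact hball)
    · intro x _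
      have hc : Continuous fun t : ℝ => v t x := by
        have hp : Continuous proj := (continuous_id.max continuous_const).min continuous_const
        exact continuous_const.add (hFc.comp (hp.prodMk (continuous_const.prodMk
          (Ls.continuous.comp (hGc.comp (hp.prodMk continuous_const))))))
      exact hc.continuousOn
    · intro t _ x hx
      rw [NNReal.coe_one] at hx
      exact ((hkey (proj t) (hproj_mem t)).2 x (hball hx)).trans (Real.le_coe_toNNReal Cb)
    · show (Real.toNNReal Cb : ℝ) * max (a - 0) (0 - -a) ≤ ((1 : NNReal) : ℝ) - ((0 : NNReal) : ℝ)
      rw [Real.coe_toNNReal _ hCb0, NNReal.coe_one, NNReal.coe_zero, sub_zero (1:ℝ)]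
      have h1 : max (a - 0) (0 - -a) = a := by
        rw [sub_zero, zero_sub, neg_neg, max_self]
      rw [h1]
      have h2 : a ≤ 1 / (Cb + 1) := min_le_right _ _
      calc Cb * a ≤ Cb * (1 / (Cb + 1)) := mul_le_mul_of_nonneg_left h2 hCb0
        _ = Cb / (Cb + 1) := by ring
        _ ≤ 1 := (div_le_one (by positivity)).2 (by linarith)
  obtain ⟨f, hf0, hfd⟩ := hpl.exists_eq_forall_mem_Icc_hasDerivWithinAt₀
  refine ⟨a / 2, by positivity, f, fun t => L.symm (G (t, f t)), ?_⟩
  have hsub : Icc (0:ℝ) (a / 2) ⊆ Icc (-a) a := by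
    intro t ht
    exact ⟨by linarith [ht.1], by linarith [ht.2]⟩
  have hproj_eq : ∀ t ∈ Icc (0:ℝ) (a / 2), proj t = t := by
    intro t ht
    dsimp [proj]
    rw [max_eq_left ht.1, min_eq_left (by linarith [ht.2] : t ≤ 1)]
  have hD : ∀ t ∈ Icc (0:ℝ) (a / 2),
      HasDerivAt f (A (f t) + F (t, f t, Ls (G (t, f t)))) t := by
    intro t ht
    have hmem : Icc (-a) a ∈ nhds t :=
      Icc_mem_nhds (by linarith [ht.1]) (by linarith [ht.2])
    have h := (hfd t (hsub ht)).hasDerivAt hmem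
    rw [hv_def] at h
    simp only [hproj_eq t ht] at h
    exact h
  have hVc : ContinuousOn f (Icc 0 (a / 2)) :=
    fun t ht => (hD t ht).continuousAt.continuousWithinAt
  have hwe : ∀ t : ℝ, (L.symm (G (t, f t)) : S) = Ls (G (t, f t)) := fun _ => rfl
  constructor
  · refine ⟨hVc, ?_, hf0, ?_⟩
    · exact (L.symm.continuous.comp hGc).comp_continuousOn (continuousOn_id.prodMk hVc)
    · intro t ht
      exact ⟨hD t ht, L.apply_symm_apply _⟩
  -- Uniqueness
  rintro V' w' ⟨hV'c, hw'c, hV'0, hV'⟩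
  have hw'eq : ∀ t ∈ Icc (0:ℝ) (a / 2), w' t = L.symm (G (t, V' t)) := by
    intro t ht
    have h := (hV' t ht).2
    rw [← h]
    exact (L.symm_apply_apply _).symm
  obtain ⟨B, hB⟩ := isCompact_Icc.exists_bound_of_continuousOn hVc
  obtain ⟨B', hB'⟩ := isCompact_Icc.exists_bound_of_continuousOn hV'c
  set Cm : ℝ := |B| + |B'| + ‖V₀‖ + 1 with hCm_def
  have hCm : ‖V₀‖ < Cm := by
    have := abs_nonneg B; have := abs_nonneg B'
    dsimp [Cm]; linarith
  obtain ⟨K', Cb', _, hkey'⟩ := key Cm hCm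
  have huniq : EqOn V' f (Icc 0 (a / 2)) := by
    apply ODE_solution_unique_of_mem_Icc_right
      (v := v) (s := fun _ => {x : E | ‖x‖ ≤ Cm}) (K := K')
      (fun t _ => (hkey' (proj t) (hproj_mem t)).1) hV'c ?_ ?_ hVc ?_ ?_
      (hV'0.trans hf0.symm)
    · intro t ht
      have htI : t ∈ Icc (0:ℝ) (a / 2) := Ico_subset_Icc_self ht
      have hd := (hV' t htI).1
      have heq : A (V' t) + F (t, V' t, w' t) = v t (V' t) := by
        rw [hw'eq t htI, hv_def]
        simp only [hproj_eq t htI]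
        rfl
      rw [heq] at hd
      exact hd.hasDerivWithinAt
    · intro t ht
      have htI : t ∈ Icc (0:ℝ) (a / 2) := Ico_subset_Icc_self ht
      have := hB' t htI
      simp only [Set.mem_setOf_eq]
      have := le_abs_self B'
      dsimp [Cm]; linarith [abs_nonneg B, norm_nonneg V₀, hB' t htI]
    · intro t ht
      have htI : t ∈ Icc (0:ℝ) (a / 2) := Ico_subset_Icc_self ht
      have hd := hD t htI
      have heq : A (f t) + F (t, f t, Ls (G (t, f t))) = v t (f t) := by
        rw [hv_def]
        simp only [hproj_eq t htI]
      rw [heq] at hd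
      exact hd.hasDerivWithinAt
    · intro t ht
      have htI : t ∈ Icc (0:ℝ) (a / 2) := Ico_subset_Icc_self ht
      simp only [Set.mem_setOf_eq]
      have := le_abs_self B
      dsimp [Cm]; linarith [abs_nonneg B', norm_nonneg V₀, hB t htI]
  intro t ht
  refine ⟨huniq ht, ?_⟩
  rw [hw'eq t ht, huniq ht]
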